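/- Let 𝓕 be an inverse shift-invariant Ramsey family on (ℕ,+) (meaning −n + E ∈ 𝓕 for all n ∈ ℕ, E ∈ 𝓕) such that β(𝓕) is a subsemigroup of (βℕ,+). For a sequence ⟨x_n⟩ in ℕ, the following are equivalent: (1) ⋂_{m=1}^∞ cl(FS(⟨x_n⟩_{n=m}^∞)) ∩ β(𝓕) ≠ ∅; (2) FS(⟨x_n⟩_{n=1}^∞) ∈ q for some ultrafilter q ⊆ 𝓕; (3) there is an idempotent ultrafilter in ⋂_{m=1}^∞ cl(FS(⟨x_n⟩_{n=m}^∞)) ∩ β(𝓕). -/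

import Mathlib

open Set

attribute [local instance] Ultrafilter.add Ultrafilter.addSemigroup

section Aux

variable {F : Set (Set ℕ)}

/-- No singleton belongs to an inverse-shift-invariant family avoiding `∅`. -/
lemma singleton_not_mem_aux (h0 : ∅ ∉ F)
    (hinv : ∀ n : ℕ, ∀ E ∈ F, {m : ℕ | n + m ∈ E} ∈ F) (a : ℕ) : ({a} : Set ℕ) ∉ F := by
  intro h
  have := hinv (a + 1) _ h
  have he : {m : ℕ | a + 1 + m ∈ ({a} : Set ℕ)} = (∅ : Set ℕ) := by
    ext m; simp only [Set.mem_setOf_eq, Set.mem_singleton_iff, Set.mem_empty_iff_false,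
      iff_false]
    omega
  rw [he] at this
  exact h0 this

/-- Decomposition of an FS-set via its first element. -/
lemma FS_subset_decomp (y : Stream' ℕ) :
    Hindman.FS y ⊆ {y.head} ∪ ((fun k => y.head + k) '' Hindman.FS y.tail ∪
      Hindman.FS y.tail) := by
  intro a ha
  cases ha with
  | head' => exact Or.inl rfl
  | tail' _ m h => exact Or.inr (Or.inr h)
  | cons' _ m h => exact Or.inr (Or.inl ⟨m, h, rfl⟩)

/-- If `FS x ∈ F` then `FS (x.drop m) ∈ F` for every `m`. -/
lemma FS_drop_mem_aux (h0 : ∅ ∉ F)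
    (hup : ∀ A ∈ F, ∀ B : Set ℕ, A ⊆ B → B ∈ F)
    (hram : ∀ A ∈ F, ∀ A₁ A₂ : Set ℕ, A = A₁ ∪ A₂ → A₁ ∈ F ∨ A₂ ∈ F)
    (hinv : ∀ n : ℕ, ∀ E ∈ F, {m : ℕ | n + m ∈ E} ∈ F)
    (x : Stream' ℕ) (hx : Hindman.FS x ∈ F) : ∀ m, Hindman.FS (x.drop m) ∈ F := by
  intro m
  induction m with
  | zero => simpa using hx
  | succ m ih =>
    set y := x.drop m with hy
    have htail : y.tail = x.drop (m + 1) := by simp [hy]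
    have hU : ({y.head} ∪ ((fun k => y.head + k) '' Hindman.FS y.tail ∪
        Hindman.FS y.tail)) ∈ F := hup _ ih _ (FS_subset_decomp y)
    rcases hram _ hU _ _ rfl with h1 | h2
    · exact absurd h1 (singleton_not_mem_aux h0 hinv _)
    rcases hram _ h2 _ _ rfl with h3 | h4
    · have := hinv y.head _ h3
      have he : {k : ℕ | y.head + k ∈ (fun k => y.head + k) '' Hindman.FS y.tail} =
          Hindman.FS y.tail := by
        ext k
        simp only [Set.mem_setOf_eq, Set.mem_image]
        constructor
        · rintro ⟨j, hj, hjk⟩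
          have : j = k := by omega
          rwa [← this]
        · exact fun hk => ⟨k, hk, rfl⟩
      rw [he] at this
      rwa [htail] at this
    · rwa [htail] at h4

/-- FS of later drops are contained in FS of earlier drops. -/
lemma FS_drop_mono (x : Stream' ℕ) {m k : ℕ} (h : m ≤ k) :
    Hindman.FS (x.drop k) ⊆ Hindman.FS (x.drop m) := by
  have : ∀ j (y : Stream' ℕ), Hindman.FS (y.drop j) ⊆ Hindman.FS y := by
    intro j
    induction j with
    | zero => intro y; simp
    | succ j ih =>
      intro y a ha
      apply Hindman.FS.tail
      apply ih y.tail
      rw [Stream'.drop_succ] at ha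
      exact ha
  have hd : (x.drop m).drop (k - m) = x.drop k := by
    rw [Stream'.drop_drop]
    rw [Nat.add_sub_of_le h]
  rw [← hd]
  exact this _ _

/-- Existence of an ultrafilter contained in `F` containing all the `FS (x.drop m)`. -/
lemma exists_ultrafilter_aux (h0 : ∅ ∉ F)
    (hup : ∀ A ∈ F, ∀ B : Set ℕ, A ⊆ B → B ∈ F)
    (hram : ∀ A ∈ F, ∀ A₁ A₂ : Set ℕ, A = A₁ ∪ A₂ → A₁ ∈ F ∨ A₂ ∈ F)
    (x : Stream' ℕ) (hFS : ∀ m, Hindman.FS (x.drop m) ∈ F) :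
    ∃ u : Ultrafilter ℕ, (∀ m, Hindman.FS (x.drop m) ∈ u) ∧ ∀ A ∈ u, A ∈ F := by
  set G : Filter ℕ :=
    { sets := {C | ∃ m, ∀ B ∈ F, B ⊆ Hindman.FS (x.drop m) → B ∩ C ∈ F}
      univ_sets := ⟨0, fun B hB _ => by simpa using hB⟩
      sets_of_superset := by
        rintro C C' ⟨m, hm⟩ hCC'
        exact ⟨m, fun B hB hBFS => hup _ (hm B hB hBFS) _
          (Set.inter_subset_inter_right _ hCC')⟩
      inter_sets := by
        rintro C C' ⟨m, hm⟩ ⟨m', hm'⟩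
        refine ⟨max m m', fun B hB hBFS => ?_⟩
        have h1 : B ∩ C ∈ F :=
          hm B hB (hBFS.trans (FS_drop_mono x (le_max_left m m')))
        have h2 : (B ∩ C) ∩ C' ∈ F :=
          hm' _ h1 ((Set.inter_subset_left).trans
            (hBFS.trans (FS_drop_mono x (le_max_right m m'))))
        rwa [Set.inter_assoc] at h2 } with hG
  have hne : G.NeBot := by
    constructor
    intro hbot
    have : (∅ : Set ℕ) ∈ G := hbot ▸ Filter.mem_bot
    rcases this with ⟨m, hm⟩
    have := hm _ (hFS m) subset_rfl
    rw [Set.inter_empty] at this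
    exact h0 this
  refine ⟨Ultrafilter.of G, fun m => ?_, fun C hC => ?_⟩
  · exact Ultrafilter.of_le G (show Hindman.FS (x.drop m) ∈ G from
      ⟨m, fun B hB hBFS => by rwa [Set.inter_eq_left.mpr hBFS]⟩)
  · have hcompl : Cᶜ ∉ G := by
      intro h
      exact (Ultrafilter.compl_notMem_iff.mpr hC) (Ultrafilter.of_le G h)
    have : ¬ ∀ B ∈ F, B ⊆ Hindman.FS (x.drop 0) → B ∩ Cᶜ ∈ F := fun h => hcompl ⟨0, h⟩
    push_neg at this
    obtain ⟨B, hB, hBFS, hBC⟩ := this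
    have hsplit : B = (B ∩ C) ∪ (B ∩ Cᶜ) := by
      ext a; by_cases h : a ∈ C <;> simp [h]
    rcases hram _ hB _ _ hsplit with h | h
    · exact hup _ h _ Set.inter_subset_right
    · exact absurd h hBC

/-- The FS part is a subsemigroup. -/
lemma FS_add_mem_aux (x : Stream' ℕ) (p q : Ultrafilter ℕ)
    (hp : ∀ m, Hindman.FS (x.drop m) ∈ p) (hq : ∀ m, Hindman.FS (x.drop m) ∈ q) :
    ∀ m, Hindman.FS (x.drop m) ∈ p + q := by
  intro m
  have : ∀ᶠ n in ↑(p + q), n ∈ Hindman.FS (x.drop m) := by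
    rw [Ultrafilter.eventually_add]
    filter_upwards [hp m] with n hn
    obtain ⟨n', hn'⟩ := Hindman.FS.add hn
    filter_upwards [hq (m + n')] with k hk
    exact hn' _ (by simpa only [Stream'.drop_drop] using hk)
  exact this

end Aux

/-- characterization of 𝓕-minimal sequences in (ℕ,+): the three conditions
(1) ⋂_m cl(FS(⟨x_n⟩_{n=m}^∞)) ∩ β(𝓕) ≠ ∅, (2) FS(⟨x_n⟩) belongs to some ultrafilter
contained in 𝓕, (3) there is an idempotent in ⋂_m cl(FS(⟨x_n⟩_{n=m}^∞)) ∩ β(𝓕),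
are equivalent. -/
theorem F_minimal_sequence_characterization (F : Set (Set ℕ))
    (hne : F.Nonempty) (h0 : ∅ ∉ F)
    (hup : ∀ A ∈ F, ∀ B : Set ℕ, A ⊆ B → B ∈ F)
    (hram : ∀ A ∈ F, ∀ A₁ A₂ : Set ℕ, A = A₁ ∪ A₂ → A₁ ∈ F ∨ A₂ ∈ F)
    (hinv : ∀ n : ℕ, ∀ E ∈ F, {m : ℕ | n + m ∈ E} ∈ F)
    (hsub : ∀ p q : Ultrafilter ℕ, (∀ A ∈ p, A ∈ F) → (∀ A ∈ q, A ∈ F) →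
      ∀ A ∈ p + q, A ∈ F)
    (x : Stream' ℕ) :
    (((⋂ m : ℕ, {p : Ultrafilter ℕ | Hindman.FS (x.drop m) ∈ p}) ∩
        {p : Ultrafilter ℕ | ∀ A ∈ p, A ∈ F}).Nonempty ↔
      ∃ q : Ultrafilter ℕ, (∀ A ∈ q, A ∈ F) ∧ Hindman.FS x ∈ q) ∧
    (((⋂ m : ℕ, {p : Ultrafilter ℕ | Hindman.FS (x.drop m) ∈ p}) ∩
        {p : Ultrafilter ℕ | ∀ A ∈ p, A ∈ F}).Nonempty ↔
      ∃ p : Ultrafilter ℕ, p + p = p ∧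
        p ∈ (⋂ m : ℕ, {p : Ultrafilter ℕ | Hindman.FS (x.drop m) ∈ p}) ∩
          {p : Ultrafilter ℕ | ∀ A ∈ p, A ∈ F}) := by
  set S : Set (Ultrafilter ℕ) :=
    (⋂ m : ℕ, {p : Ultrafilter ℕ | Hindman.FS (x.drop m) ∈ p}) ∩
      {p : Ultrafilter ℕ | ∀ A ∈ p, A ∈ F} with hS
  -- (1) → (2)
  have h12 : S.Nonempty → ∃ q : Ultrafilter ℕ, (∀ A ∈ q, A ∈ F) ∧ Hindman.FS x ∈ q := by
    rintro ⟨p, hp1, hp2⟩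
    refine ⟨p, hp2, ?_⟩
    have := Set.mem_iInter.mp hp1 0
    simpa using this
  -- (2) → (1)
  have h21 : (∃ q : Ultrafilter ℕ, (∀ A ∈ q, A ∈ F) ∧ Hindman.FS x ∈ q) → S.Nonempty := by
    rintro ⟨q, hqF, hqFS⟩
    have hxF : Hindman.FS x ∈ F := hqF _ hqFS
    have hFS : ∀ m, Hindman.FS (x.drop m) ∈ F := FS_drop_mem_aux h0 hup hram hinv x hxF
    obtain ⟨u, hu1, hu2⟩ := exists_ultrafilter_aux h0 hup hram x hFS
    exact ⟨u, Set.mem_iInter.mpr hu1, hu2⟩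
  -- (1) → (3)
  have h13 : S.Nonempty → ∃ p : Ultrafilter ℕ, p + p = p ∧ p ∈ S := by
    intro hSne
    have hclosed : IsClosed S := by
      have h1 : IsClosed (⋂ m : ℕ, {p : Ultrafilter ℕ | Hindman.FS (x.drop m) ∈ p}) :=
        isClosed_iInter fun m => ultrafilter_isClosed_basic _
      have heq : {p : Ultrafilter ℕ | ∀ A ∈ p, A ∈ F} =
          ⋂ (A : Set ℕ) (_ : A ∉ F), {p : Ultrafilter ℕ | Aᶜ ∈ p} := by
        ext p
        simp only [Set.mem_setOf_eq, Set.mem_iInter]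
        constructor
        · intro hp A hA
          by_contra h
          exact hA (hp A (Ultrafilter.compl_notMem_iff.mp h))
        · intro h A hA
          by_contra hAF
          exact (Ultrafilter.compl_notMem_iff.mpr hA) (h A hAF)
      have h2 : IsClosed {p : Ultrafilter ℕ | ∀ A ∈ p, A ∈ F} := by
        rw [heq]
        exact isClosed_iInter fun A => isClosed_iInter fun _ => ultrafilter_isClosed_basic _
      exact h1.inter h2
    have hsemi : ∀ p ∈ S, ∀ q ∈ S, p + q ∈ S := by
      rintro p ⟨hp1, hp2⟩ q ⟨hq1, hq2⟩
      constructor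
      · exact Set.mem_iInter.mpr
          (FS_add_mem_aux x p q (Set.mem_iInter.mp hp1) (Set.mem_iInter.mp hq1))
      · exact hsub p q hp2 hq2
    obtain ⟨p, hpS, hpid⟩ := exists_idempotent_in_compact_add_subsemigroup
      Ultrafilter.continuous_add_left S hSne hclosed.isCompact hsemi
    exact ⟨p, hpid, hpS⟩
  refine ⟨⟨h12, h21⟩, ⟨h13, ?_⟩⟩
  rintro ⟨p, _, hpS⟩
  exact ⟨p, hpS⟩
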